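/- For all density matrices ρ and σ on ℂ^n, the trace distance is bounded by the fidelity via Δ(ρ,σ) ≤ √(1 − F(ρ,σ)²). -/

import Mathlib

open Matrix Kronecker ComplexOrder

/-- The square root of a positive semidefinite matrix (the former `Matrix.PosSemidef.sqrt`). -/
noncomputable def Matrix.PosSemidef.sqrt {n : Type*} [Fintype n] [DecidableEq n] {A : Matrix n n ℂ}
    (hA : A.PosSemidef) : Matrix n n ℂ :=
  hA.1.eigenvectorUnitary.1 * diagonal (fun i => ((Real.sqrt (hA.1.eigenvalues i) : ℝ) : ℂ)) *
    (star hA.1.eigenvectorUnitary : Matrix n n ℂ)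

/-- The trace norm `‖A‖₁ = Tr √(Aᴴ A)` of a complex matrix. -/
noncomputable def traceNorm {n : Type*} [Fintype n] [DecidableEq n] (A : Matrix n n ℂ) : ℝ :=
  ((Matrix.posSemidef_conjTranspose_mul_self A).sqrt.trace).re

/-- The trace distance `Δ(ρ,σ) = ‖ρ - σ‖₁ / 2`. -/
noncomputable def traceDist {n : Type*} [Fintype n] [DecidableEq n] (ρ σ : Matrix n n ℂ) : ℝ :=
  traceNorm (ρ - σ) / 2

open scoped Classical in
/-- Positive semidefinite square root (junk value `0` on non-PSD matrices). -/
noncomputable def psdSqrt {n : Type*} [Fintype n] [DecidableEq n] (A : Matrix n n ℂ) :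
    Matrix n n ℂ :=
  if h : A.PosSemidef then h.sqrt else 0

/-- The fidelity `F(ρ,σ) = ‖√ρ √σ‖₁`. -/
noncomputable def fidelity {n : Type*} [Fintype n] [DecidableEq n] (ρ σ : Matrix n n ℂ) : ℝ :=
  traceNorm (psdSqrt ρ * psdSqrt σ)

/-- A density matrix: positive semidefinite with trace 1. -/
def IsDensityMatrix {n : Type*} [Fintype n] [DecidableEq n] (ρ : Matrix n n ℂ) : Prop :=
  ρ.PosSemidef ∧ ρ.trace = 1

/-- The projector `|b⟩⟨b|` on ℂ². -/
noncomputable def proj (b : Bool) : Matrix Bool Bool ℂ := Matrix.single b b 1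

/-- The strong oblivious transfer channel `F_{(x₀,x₁)}`. -/
noncomputable def sotChannel (x₀ x₁ : Bool) (ρ : Matrix (Bool × Bool) (Bool × Bool) ℂ) :
    Matrix (Bool × Bool) (Bool × Bool) ℂ :=
  ∑ i : Bool, ∑ i' : Bool,
    ρ (i, i') (i, i') •
      (((1/2 : ℂ) • (1 : Matrix Bool Bool ℂ)) ⊗ₖ proj (xor (bif xor i i' then x₁ else x₀) i'))

section FvdG
set_option linter.unusedSectionVars false

variable {n : Type*} [Fintype n] [DecidableEq n]

lemma cs_re (a b : n → ℂ) :
    (star a ⬝ᵥ b).re ≤ Real.sqrt (star a ⬝ᵥ a).re * Real.sqrt (star b ⬝ᵥ b).re := by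
  let x : EuclideanSpace ℂ n := WithLp.toLp 2 a
  let y : EuclideanSpace ℂ n := WithLp.toLp 2 b
  have h1 : inner ℂ x y = star a ⬝ᵥ b := (EuclideanSpace.inner_toLp_toLp a b).trans (dotProduct_comm _ _)
  have h2 : (inner ℂ x y : ℂ).re ≤ ‖(inner ℂ x y : ℂ)‖ := Complex.re_le_norm _
  have h3 := norm_inner_le_norm (𝕜 := ℂ) x y
  have hxx : inner ℂ x x = star a ⬝ᵥ a := (EuclideanSpace.inner_toLp_toLp a a).trans (dotProduct_comm _ _)
  have hyy : inner ℂ y y = star b ⬝ᵥ b := (EuclideanSpace.inner_toLp_toLp b b).trans (dotProduct_comm _ _)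
  have hx : ‖x‖ = Real.sqrt (star a ⬝ᵥ a).re := by
    rw [norm_eq_sqrt_re_inner (𝕜 := ℂ) x, hxx]; rfl
  have hy : ‖y‖ = Real.sqrt (star b ⬝ᵥ b).re := by
    rw [norm_eq_sqrt_re_inner (𝕜 := ℂ) y, hyy]; rfl
  rw [← h1, ← hx, ← hy]
  exact h2.trans h3

lemma conj_mul_conj (U : Matrix.unitaryGroup n ℂ) (a b : n → ℂ) :
    ((U : Matrix n n ℂ) * diagonal a * star (U : Matrix n n ℂ)) *
      ((U : Matrix n n ℂ) * diagonal b * star (U : Matrix n n ℂ)) =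
    (U : Matrix n n ℂ) * diagonal (fun i => a i * b i) * star (U : Matrix n n ℂ) := by
  have h : star (U : Matrix n n ℂ) * (U : Matrix n n ℂ) = 1 := Unitary.coe_star_mul_self U
  calc ((U : Matrix n n ℂ) * diagonal a * star (U : Matrix n n ℂ)) *
      ((U : Matrix n n ℂ) * diagonal b * star (U : Matrix n n ℂ))
      = (U : Matrix n n ℂ) * diagonal a * (star (U : Matrix n n ℂ) * (U : Matrix n n ℂ)) *
        diagonal b * star (U : Matrix n n ℂ) := by noncomm_ring
    _ = (U : Matrix n n ℂ) * (diagonal a * diagonal b) * star (U : Matrix n n ℂ) := by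
        rw [h]; noncomm_ring
    _ = _ := by rw [diagonal_mul_diagonal]

lemma conj_posSemidef (U : Matrix.unitaryGroup n ℂ) (f : n → ℝ) (hf : ∀ i, 0 ≤ f i) :
    ((U : Matrix n n ℂ) * diagonal (fun i => (f i : ℂ)) * star (U : Matrix n n ℂ)).PosSemidef := by
  have hd : (diagonal (fun i => (f i : ℂ))).PosSemidef := by
    rw [posSemidef_diagonal_iff]
    intro i
    exact_mod_cast hf i
  simpa [Matrix.star_eq_conjTranspose] using hd.mul_mul_conjTranspose_same (U : Matrix n n ℂ)

lemma sqrt_def {K : Matrix n n ℂ} (hK : K.PosSemidef) :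
    hK.sqrt = (hK.1.eigenvectorUnitary : Matrix n n ℂ) *
      diagonal (fun i => (Real.sqrt (hK.1.eigenvalues i) : ℂ)) *
      star (hK.1.eigenvectorUnitary : Matrix n n ℂ) := rfl

lemma herm_spec {K : Matrix n n ℂ} (hK : K.IsHermitian) : K = (hK.eigenvectorUnitary : Matrix n n ℂ) *
    diagonal (fun i => (hK.eigenvalues i : ℂ)) * star (hK.eigenvectorUnitary : Matrix n n ℂ) := by
  have := hK.spectral_theorem
  rwa [Unitary.conjStarAlgAut_apply] at this

lemma Matrix.PosSemidef.posSemidef_sqrt {K : Matrix n n ℂ} (hK : K.PosSemidef) :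
    hK.sqrt.PosSemidef :=
  conj_posSemidef _ _ fun i => Real.sqrt_nonneg _

lemma Matrix.PosSemidef.sqrt_mul_self {K : Matrix n n ℂ} (hK : K.PosSemidef) :
    hK.sqrt * hK.sqrt = K := by
  rw [sqrt_def, conj_mul_conj]
  have hf : (fun i => ((Real.sqrt (hK.1.eigenvalues i) : ℝ) : ℂ) *
      ((Real.sqrt (hK.1.eigenvalues i) : ℝ) : ℂ)) = fun i => ((hK.1.eigenvalues i : ℝ) : ℂ) := by
    funext i
    rw [← Complex.ofReal_mul, Real.mul_self_sqrt (hK.eigenvalues_nonneg i)]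
  rw [hf]
  exact (herm_spec hK.1).symm

open scoped MatrixOrder in
lemma Matrix.PosSemidef.eq_sqrt_of_sq_eq {C K : Matrix n n ℂ} (hC : C.PosSemidef)
    (hK : K.PosSemidef) (h : C ^ 2 = K) : C = hK.sqrt := by
  have h1 : CFC.sqrt K = C := (CFC.sqrt_eq_iff K C hK.nonneg hC.nonneg).2 (by rw [← h, pow_two])
  have h2 : CFC.sqrt K = hK.sqrt :=
    (CFC.sqrt_eq_iff K _ hK.nonneg hK.posSemidef_sqrt.nonneg).2 hK.sqrt_mul_self
  rw [← h1, h2]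

lemma psd_diag_nonneg {X : Matrix n n ℂ} (hX : X.PosSemidef) (i : n) :
    0 ≤ X i i := by
  exact hX.diag_nonneg

lemma psd_diag_re {X : Matrix n n ℂ} (hX : X.PosSemidef) (i : n) :
    X i i = ((X i i).re : ℂ) ∧ 0 ≤ (X i i).re := by
  have h := psd_diag_nonneg hX i
  rw [Complex.le_def] at h
  obtain ⟨h1, h2⟩ := h
  simp only [Complex.zero_re, Complex.zero_im] at h1 h2
  exact ⟨by rw [Complex.ext_iff]; simp [← h2], h1⟩

lemma inv_sqrt_mul_self {x : ℝ} (hx : 0 ≤ x) : (Real.sqrt x)⁻¹ * x = Real.sqrt x := by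
  rcases hx.eq_or_lt with h | h
  · simp [← h]
  · have hs : Real.sqrt x ≠ 0 := by positivity
    field_simp
    exact (Real.sq_sqrt hx).symm

lemma fidelity_le_measure {ρ σ : Matrix n n ℂ} (hρ : ρ.PosSemidef) (hσ : σ.PosSemidef)
    (U : Matrix.unitaryGroup n ℂ) :
    fidelity ρ σ ≤ ∑ i, Real.sqrt ((star (U : Matrix n n ℂ) * ρ * U) i i).re *
      Real.sqrt ((star (U : Matrix n n ℂ) * σ * U) i i).re := by
  have hsρ : psdSqrt ρ = hρ.sqrt := by simp [psdSqrt, hρ]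
  have hsσ : psdSqrt σ = hσ.sqrt := by simp [psdSqrt, hσ]
  set sρ := hρ.sqrt with hsρ'
  set sσ := hσ.sqrt with hsσ'
  have hsρh : sρᴴ = sρ := hρ.posSemidef_sqrt.1.eq
  have hsσh : sσᴴ = sσ := hσ.posSemidef_sqrt.1.eq
  have hsρs : sρ * sρ = ρ := hρ.sqrt_mul_self
  have hsσs : sσ * sσ = σ := hσ.sqrt_mul_self
  set M := sρ * sσ with hM
  have hK := Matrix.posSemidef_conjTranspose_mul_self M
  set W := hK.1.eigenvectorUnitary with hW
  set d := hK.1.eigenvalues with hd'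
  have hd : ∀ i, 0 ≤ d i := fun i => hK.eigenvalues_nonneg i
  have hUU : (U : Matrix n n ℂ) * star (U : Matrix n n ℂ) = 1 :=
    Matrix.mem_unitaryGroup_iff.mp U.2
  have hWW : (W : Matrix n n ℂ) * star (W : Matrix n n ℂ) = 1 :=
    Matrix.mem_unitaryGroup_iff.mp W.2
  set g : n → ℂ := fun i => ((Real.sqrt (d i))⁻¹ : ℂ) with hg
  set G : Matrix n n ℂ := (W : Matrix n n ℂ) * diagonal g * star (W : Matrix n n ℂ) with hG
  set V : Matrix n n ℂ := M * G with hV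
  -- G is Hermitian
  have hgstar : star g = g := by
    funext i
    rw [hg]
    simp [Complex.star_def, Complex.conj_ofReal]
  have hdg : (diagonal g)ᴴ = diagonal g := by
    rw [diagonal_conjTranspose, hgstar]
  have hGh : Gᴴ = G := by
    rw [hG, conjTranspose_mul, conjTranspose_mul, hdg]
    simp only [← Matrix.star_eq_conjTranspose, star_star]
    rw [mul_assoc]
  -- spectral decomposition of MᴴM
  have hspecK : Mᴴ * M = (W : Matrix n n ℂ) * diagonal (fun i => (d i : ℂ)) *
      star (W : Matrix n n ℂ) := herm_spec hK.1
  -- Vᴴ V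
  have hVh : Vᴴ = G * Mᴴ := by rw [hV, conjTranspose_mul, hGh]
  have hVV : Vᴴ * V = (W : Matrix n n ℂ) *
      diagonal (fun i => g i * (d i : ℂ) * g i) * star (W : Matrix n n ℂ) := by
    have h1 : Vᴴ * V = G * (Mᴴ * M) * G := by rw [hVh, hV]; noncomm_ring
    rw [h1, hspecK, hG, conj_mul_conj, conj_mul_conj]
  -- Vᴴ M = sqrt of MᴴM
  have hVM : Vᴴ * M = hK.sqrt := by
    have h1 : Vᴴ * M = G * (Mᴴ * M) := by rw [hVh]; noncomm_ring
    have hgd : (fun i => g i * (d i : ℂ)) = fun i => ((Real.sqrt (d i) : ℝ) : ℂ) := by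
      funext i
      simp only [hg, ← Complex.ofReal_inv, ← Complex.ofReal_mul]
      exact_mod_cast inv_sqrt_mul_self (hd i)
    rw [h1]
    conv_lhs => rw [hspecK, hG, conj_mul_conj]
    rw [hgd]
    exact (sqrt_def hK).symm
  -- fidelity as a trace
  have hfid : fidelity ρ σ = ((hK.sqrt).trace).re := by
    rw [fidelity, hsρ, hsσ]
    rfl
  -- contraction: 1 - VᴴV is PSD
  set t : n → ℝ := fun i => (Real.sqrt (d i))⁻¹ * d i * (Real.sqrt (d i))⁻¹ with ht'
  have htnn : ∀ i, 0 ≤ 1 - t i := by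
    intro i
    rcases (hd i).eq_or_lt with h | h
    · simp [ht', ← h]
    · have : t i = 1 := by
        have hs : Real.sqrt (d i) ≠ 0 := by positivity
        show (Real.sqrt (d i))⁻¹ * d i * (Real.sqrt (d i))⁻¹ = 1
        rw [inv_sqrt_mul_self (hd i), mul_inv_cancel₀ hs]
      rw [this]; norm_num
  have hcontr : (1 - Vᴴ * V).PosSemidef := by
    have h1 : (1 : Matrix n n ℂ) = (W : Matrix n n ℂ) * diagonal (fun _ => (1:ℂ)) *
        star (W : Matrix n n ℂ) := by
      rw [diagonal_one, mul_one, hWW]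
    have h2 : 1 - Vᴴ * V = (W : Matrix n n ℂ) * diagonal (fun i => ((1 - t i : ℝ) : ℂ)) *
        star (W : Matrix n n ℂ) := by
      rw [hVV]
      conv_lhs => rw [h1]
      rw [← sub_mul, ← mul_sub, diagonal_sub]
      congr 2
      funext i
      rw [ht', hg]
      push_cast
      ring
    rw [h2]
    exact conj_posSemidef W _ htnn
  -- trace manipulation
  set A' : Matrix n n ℂ := V * sσ * (U : Matrix n n ℂ) with hA'
  set B' : Matrix n n ℂ := sρ * (U : Matrix n n ℂ) with hB'
  have hA'h : A'ᴴ = star (U : Matrix n n ℂ) * sσ * Vᴴ := by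
    rw [hA', conjTranspose_mul, conjTranspose_mul, hsσh, ← Matrix.star_eq_conjTranspose,
      mul_assoc]
  have htr : (Vᴴ * M).trace = (A'ᴴ * B').trace := by
    have h1 : A'ᴴ * B' = star (U : Matrix n n ℂ) * (sσ * Vᴴ * sρ) * (U : Matrix n n ℂ) := by
      rw [hA'h, hB']; noncomm_ring
    have h2 : (sσ * Vᴴ * sρ).trace = (Vᴴ * M).trace := by
      rw [hM, trace_mul_cycle sσ Vᴴ sρ, trace_mul_comm Vᴴ (sρ * sσ), mul_assoc]
    rw [h1, trace_mul_cycle, ← mul_assoc, hUU, one_mul, h2, hM, mul_assoc]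
  -- the two Gram matrices
  have hAA : A'ᴴ * A' = star (U : Matrix n n ℂ) * (sσ * ((Vᴴ * V) * sσ)) * (U : Matrix n n ℂ) := by
    rw [hA'h, hA']; noncomm_ring
  have hBB : B'ᴴ * B' = star (U : Matrix n n ℂ) * ρ * (U : Matrix n n ℂ) := by
    rw [hB', conjTranspose_mul, hsρh, ← Matrix.star_eq_conjTranspose]
    calc star (U : Matrix n n ℂ) * sρ * (sρ * (U : Matrix n n ℂ))
        = star (U : Matrix n n ℂ) * (sρ * sρ) * (U : Matrix n n ℂ) := by noncomm_ring
      _ = _ := by rw [hsρs]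
  -- diag entries of A'ᴴA' bounded by those of UᴴσU
  have hdiagbound : ∀ i, ((A'ᴴ * A') i i).re ≤ ((star (U : Matrix n n ℂ) * σ * U) i i).re := by
    intro i
    have hpsd : (((sσ * (U : Matrix n n ℂ))ᴴ) * (1 - Vᴴ * V) *
        (sσ * (U : Matrix n n ℂ))).PosSemidef :=
      hcontr.conjTranspose_mul_mul_same _
    have hident : ((sσ * (U : Matrix n n ℂ))ᴴ) * (1 - Vᴴ * V) * (sσ * (U : Matrix n n ℂ)) =
        star (U : Matrix n n ℂ) * σ * (U : Matrix n n ℂ) - A'ᴴ * A' := by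
      rw [hAA, conjTranspose_mul, hsσh, ← Matrix.star_eq_conjTranspose, ← hsσs]
      noncomm_ring
    have := (psd_diag_re hpsd i).2
    rw [hident] at this
    simp only [Matrix.sub_apply, Complex.sub_re] at this
    linarith
  -- entries as dot products, Cauchy-Schwarz
  have key : ∀ i, ((A'ᴴ * B') i i).re ≤
      Real.sqrt ((star (U : Matrix n n ℂ) * ρ * U) i i).re *
      Real.sqrt ((star (U : Matrix n n ℂ) * σ * U) i i).re := by
    intro i
    set a : n → ℂ := fun j => A' j i with ha
    set b : n → ℂ := fun j => B' j i with hb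
    have e1 : (A'ᴴ * B') i i = star a ⬝ᵥ b := by
      simp [mul_apply, conjTranspose_apply, dotProduct, ha, hb]
    have e2 : (A'ᴴ * A') i i = star a ⬝ᵥ a := by
      simp [mul_apply, conjTranspose_apply, dotProduct, ha]
    have e3 : (B'ᴴ * B') i i = star b ⬝ᵥ b := by
      simp [mul_apply, conjTranspose_apply, dotProduct, hb]
    have hcs := cs_re a b
    rw [← e1, ← e2, ← e3] at hcs
    refine hcs.trans ?_
    rw [mul_comm]
    apply mul_le_mul
    · rw [hBB]
    · exact Real.sqrt_le_sqrt (hdiagbound i)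
    · exact Real.sqrt_nonneg _
    · exact Real.sqrt_nonneg _
  -- put it together
  rw [hfid, ← hVM, htr]
  have htrace : ((A'ᴴ * B').trace).re = ∑ i, ((A'ᴴ * B') i i).re := by
    rw [Matrix.trace]
    exact Complex.re_sum _ _
  rw [htrace]
  exact Finset.sum_le_sum fun i _ => key i

lemma trace_sqrt {K : Matrix n n ℂ} (hK : K.PosSemidef) :
    hK.sqrt.trace = ((∑ i, Real.sqrt (hK.1.eigenvalues i) : ℝ) : ℂ) := by
  rw [sqrt_def hK, trace_mul_cycle, Unitary.coe_star_mul_self, one_mul,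
    trace_diagonal]
  push_cast
  rfl
lemma traceNorm_eq_sum_sqrt (A : Matrix n n ℂ) :
    traceNorm A = ∑ i, Real.sqrt ((Matrix.posSemidef_conjTranspose_mul_self A).1.eigenvalues i) := by
  rw [traceNorm, trace_sqrt]
  exact Complex.ofReal_re _
lemma traceNorm_nonneg (A : Matrix n n ℂ) : 0 ≤ traceNorm A := by
  rw [traceNorm_eq_sum_sqrt]
  exact Finset.sum_nonneg fun i _ => Real.sqrt_nonneg _
lemma traceNorm_hermitian {A : Matrix n n ℂ} (hA : A.IsHermitian) :
    traceNorm A = ∑ i, |hA.eigenvalues i| := by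
  set U := hA.eigenvectorUnitary with hU
  set lam := hA.eigenvalues with hlam
  have hspec : A = (U : Matrix n n ℂ) * diagonal (fun i => (lam i : ℂ)) * star (U : Matrix n n ℂ) :=
    herm_spec hA
  set C : Matrix n n ℂ :=
    (U : Matrix n n ℂ) * diagonal (fun i => ((|lam i| : ℝ) : ℂ)) * star (U : Matrix n n ℂ) with hC
  have hCpsd : C.PosSemidef := conj_posSemidef U _ fun i => abs_nonneg _
  have hK := Matrix.posSemidef_conjTranspose_mul_self A
  have hsq : C ^ 2 = Aᴴ * A := by
    rw [pow_two, hC, conj_mul_conj, hA.eq]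
    conv_rhs => rw [hspec, conj_mul_conj]
    have heq : (fun i => ((|lam i| : ℝ) : ℂ) * ((|lam i| : ℝ) : ℂ))
        = (fun i => ((lam i : ℝ) : ℂ) * ((lam i : ℝ) : ℂ)) := by
      funext i
      rw [← Complex.ofReal_mul, ← Complex.ofReal_mul, abs_mul_abs_self]
    rw [heq]
  have hCs : C = hK.sqrt := hCpsd.eq_sqrt_of_sq_eq hK hsq
  have : hK.sqrt.trace = ((∑ i, |lam i| : ℝ) : ℂ) := by
    rw [← hCs, hC, trace_mul_cycle, Unitary.coe_star_mul_self, one_mul, trace_diagonal]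
    push_cast
    rfl
  rw [traceNorm, this]
  exact Complex.ofReal_re _

end FvdG

/-- Fuchs–van de Graaf: `Δ(ρ,σ) ≤ √(1 - F(ρ,σ)²)` for density matrices. -/
theorem stmt_0 {n : ℕ} (ρ σ : Matrix (Fin n) (Fin n) ℂ)
    (hρ : IsDensityMatrix ρ) (hσ : IsDensityMatrix σ) :
    traceDist ρ σ ≤ Real.sqrt (1 - fidelity ρ σ ^ 2) := by
  classical
  set A := ρ - σ with hAdef
  have hA : A.IsHermitian := hρ.1.1.sub hσ.1.1
  set U := hA.eigenvectorUnitary with hU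
  set lam := hA.eigenvalues with hlam
  have hUU : (U : Matrix (Fin n) (Fin n) ℂ) * star (U : Matrix (Fin n) (Fin n) ℂ) = 1 :=
    Matrix.mem_unitaryGroup_iff.mp U.2
  set p : Fin n → ℝ := fun i => ((star (U : Matrix (Fin n) (Fin n) ℂ) * ρ * U) i i).re with hp
  set q : Fin n → ℝ := fun i => ((star (U : Matrix (Fin n) (Fin n) ℂ) * σ * U) i i).re with hq
  have hppsd : (star (U : Matrix (Fin n) (Fin n) ℂ) * ρ * U).PosSemidef := by
    have := hρ.1.conjTranspose_mul_mul_same (B := (U : Matrix (Fin n) (Fin n) ℂ))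
    rwa [← Matrix.star_eq_conjTranspose] at this
  have hqpsd : (star (U : Matrix (Fin n) (Fin n) ℂ) * σ * U).PosSemidef := by
    have := hσ.1.conjTranspose_mul_mul_same (B := (U : Matrix (Fin n) (Fin n) ℂ))
    rwa [← Matrix.star_eq_conjTranspose] at this
  have hp0 : ∀ i, 0 ≤ p i := fun i => (psd_diag_re hppsd i).2
  have hq0 : ∀ i, 0 ≤ q i := fun i => (psd_diag_re hqpsd i).2
  have hdiag : star (U : Matrix (Fin n) (Fin n) ℂ) * A * U
      = diagonal (fun i => (lam i : ℂ)) := by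
    have h' : star (U : Matrix (Fin n) (Fin n) ℂ) * (U : Matrix (Fin n) (Fin n) ℂ) = 1 :=
      Unitary.coe_star_mul_self U
    rw [herm_spec hA]
    simp only [← mul_assoc, h', one_mul]
    rw [mul_assoc, h', mul_one]
    exact Matrix.one_mul _
  have hpq : ∀ i, p i - q i = lam i := by
    intro i
    have h1 : star (U : Matrix (Fin n) (Fin n) ℂ) * ρ * U -
        star (U : Matrix (Fin n) (Fin n) ℂ) * σ * U = diagonal (fun i => (lam i : ℂ)) := by
      rw [← hdiag, hAdef]
      noncomm_ring
    have h2 : (star (U : Matrix (Fin n) (Fin n) ℂ) * ρ * U) i i -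
        (star (U : Matrix (Fin n) (Fin n) ℂ) * σ * U) i i = (lam i : ℂ) := by
      have := congrArg (fun X => X i i) h1
      simpa [Matrix.sub_apply, diagonal_apply_eq] using this
    have := congrArg Complex.re h2
    simpa [Complex.sub_re, Complex.ofReal_re] using this
  have hsump : ∑ i, p i = 1 := by
    have h1 : (star (U : Matrix (Fin n) (Fin n) ℂ) * ρ * U).trace = ρ.trace := by
      rw [trace_mul_cycle, hUU, one_mul]
    have h2 : ∑ i, p i = ((star (U : Matrix (Fin n) (Fin n) ℂ) * ρ * U).trace).re := by
      rw [Matrix.trace, Complex.re_sum]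
      rfl
    rw [h2, h1, hρ.2]
    rfl
  have hsumq : ∑ i, q i = 1 := by
    have h1 : (star (U : Matrix (Fin n) (Fin n) ℂ) * σ * U).trace = σ.trace := by
      rw [trace_mul_cycle, hUU, one_mul]
    have h2 : ∑ i, q i = ((star (U : Matrix (Fin n) (Fin n) ℂ) * σ * U).trace).re := by
      rw [Matrix.trace, Complex.re_sum]
      rfl
    rw [h2, h1, hσ.2]
    rfl
  -- trace distance via eigenvalues
  have htd : traceDist ρ σ = (∑ i, |p i - q i|) / 2 := by
    rw [traceDist, traceNorm_hermitian hA]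
    congr 1
    exact Finset.sum_congr rfl fun i _ => by rw [hpq i]
  -- classical fidelity
  set F : ℝ := ∑ i, Real.sqrt (p i) * Real.sqrt (q i) with hF
  have hF0 : 0 ≤ F :=
    Finset.sum_nonneg fun i _ => mul_nonneg (Real.sqrt_nonneg _) (Real.sqrt_nonneg _)
  have hfidF : fidelity ρ σ ≤ F := fidelity_le_measure hρ.1 hσ.1 U
  have hfid0 : 0 ≤ fidelity ρ σ := traceNorm_nonneg _
  -- classical Fuchs-van de Graaf via Cauchy-Schwarz
  have hsub : ∑ i, (Real.sqrt (p i) - Real.sqrt (q i)) ^ 2 = 2 - 2 * F := by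
    have : ∀ i, (Real.sqrt (p i) - Real.sqrt (q i)) ^ 2
        = p i + q i - 2 * (Real.sqrt (p i) * Real.sqrt (q i)) := by
      intro i
      have h1 := Real.sq_sqrt (hp0 i)
      have h2 := Real.sq_sqrt (hq0 i)
      ring_nf
      nlinarith [h1, h2]
    rw [Finset.sum_congr rfl fun i _ => this i]
    rw [Finset.sum_sub_distrib, Finset.sum_add_distrib, hsump, hsumq, ← Finset.mul_sum, ← hF]
    ring
  have hadd : ∑ i, (Real.sqrt (p i) + Real.sqrt (q i)) ^ 2 = 2 + 2 * F := by
    have : ∀ i, (Real.sqrt (p i) + Real.sqrt (q i)) ^ 2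
        = p i + q i + 2 * (Real.sqrt (p i) * Real.sqrt (q i)) := by
      intro i
      have h1 := Real.sq_sqrt (hp0 i)
      have h2 := Real.sq_sqrt (hq0 i)
      nlinarith [h1, h2]
    rw [Finset.sum_congr rfl fun i _ => this i]
    rw [Finset.sum_add_distrib, Finset.sum_add_distrib, hsump, hsumq, ← Finset.mul_sum, ← hF]
    ring
  have hcs : (∑ i, |p i - q i|) ^ 2 ≤ (2 - 2 * F) * (2 + 2 * F) := by
    rw [← hsub, ← hadd]
    apply Finset.sum_sq_le_sum_mul_sum_of_sq_eq_mul
    · exact fun i _ => sq_nonneg _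
    · exact fun i _ => sq_nonneg _
    · intro i _
      have h1 := Real.sq_sqrt (hp0 i)
      have h2 := Real.sq_sqrt (hq0 i)
      rw [sq_abs]
      nlinarith [h1, h2]
  have habs0 : 0 ≤ ∑ i, |p i - q i| := Finset.sum_nonneg fun i _ => abs_nonneg _
  -- combine
  have hfidsq : fidelity ρ σ ^ 2 ≤ F ^ 2 := by nlinarith [hfidF, hfid0]
  have hkey : (∑ i, |p i - q i|) ^ 2 ≤ 4 * (1 - fidelity ρ σ ^ 2) := by nlinarith [hcs, hfidsq]
  rw [htd]
  rw [div_le_iff₀ (by norm_num : (0:ℝ) < 2)]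
  have h2s : Real.sqrt (1 - fidelity ρ σ ^ 2) * 2 = Real.sqrt (4 * (1 - fidelity ρ σ ^ 2)) := by
    rw [Real.sqrt_mul (by norm_num : (0:ℝ) ≤ 4),
      show Real.sqrt 4 = 2 by
        rw [show (4:ℝ) = 2^2 by norm_num, Real.sqrt_sq (by norm_num : (0:ℝ) ≤ 2)]]
    ring
  rw [h2s]
  have := Real.sqrt_le_sqrt hkey
  rwa [Real.sqrt_sq habs0] at this
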